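/- Let sys : {(g,n) : 2g−2+n > 0} → ℝ satisfy: (i) sys(g,0) ≥ U·ln g for g ≥ 2; (ii) sys(g,n) ≥ min{U·ln g, 2·arccosh(2(g−1)/n + 1)} for g ≥ 2, n ≥ 1; (iii) sys(g,n) ≤ 4·arccosh((6g−6+3n)/n) for n ≥ 2. Then for any function n : ℕ → ℕ with n(g) ≥ 2 and g/n(g) → ∞, there exist constants 0 < c ≤ C and g₀ such that c·ln(g/n(g)) ≤ sys(g, n(g)) ≤ C·ln(g/n(g)) for all g ≥ g₀. -/

import Mathlib

open Filter

noncomputable def arcosh (x : ℝ) : ℝ := Real.log (x + Real.sqrt (x ^ 2 - 1))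

lemma log_le_arcosh {y : ℝ} (hy : 1 ≤ y) : Real.log y ≤ arcosh y := by
  apply Real.log_le_log (by linarith)
  nlinarith [Real.sqrt_nonneg (y ^ 2 - 1)]

lemma arcosh_le_log {y : ℝ} (hy : 1 ≤ y) : arcosh y ≤ Real.log (2 * y) := by
  apply Real.log_le_log
  · nlinarith [Real.sqrt_nonneg (y ^ 2 - 1)]
  · have h : Real.sqrt (y ^ 2 - 1) ≤ Real.sqrt (y ^ 2) :=
      Real.sqrt_le_sqrt (by nlinarith)
    rw [Real.sqrt_sq (by linarith)] at h
    linarith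

theorem sys_two_sided_log_bound (U : ℝ) (hU : 0 < U) (sys : ℕ → ℕ → ℝ)
    (h1 : ∀ g : ℕ, 2 ≤ g → U * Real.log (g : ℝ) ≤ sys g 0)
    (h2 : ∀ g m : ℕ, 2 ≤ g → 1 ≤ m →
      min (U * Real.log (g : ℝ)) (2 * arcosh (2 * ((g : ℝ) - 1) / (m : ℝ) + 1)) ≤ sys g m)
    (h3 : ∀ g m : ℕ, 2 ≤ m →
      sys g m ≤ 4 * arcosh ((6 * (g : ℝ) - 6 + 3 * (m : ℝ)) / (m : ℝ)))
    (n : ℕ → ℕ) (hn : ∀ g, 2 ≤ n g)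
    (hlim : Tendsto (fun g : ℕ => (g : ℝ) / (n g : ℝ)) atTop atTop) :
    ∃ c C : ℝ, 0 < c ∧ c ≤ C ∧ ∃ g₀ : ℕ, ∀ g ≥ g₀,
      c * Real.log ((g : ℝ) / (n g : ℝ)) ≤ sys g (n g) ∧
      sys g (n g) ≤ C * Real.log ((g : ℝ) / (n g : ℝ)) := by
  refine ⟨min U 2, 8, lt_min hU two_pos,
    le_trans (min_le_right _ _) (by norm_num), ?_⟩
  obtain ⟨g₀, hg₀⟩ := eventually_atTop.mp (hlim.eventually_ge_atTop 13)
  refine ⟨g₀, fun g hg => ?_⟩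
  have hx13 : (13 : ℝ) ≤ (g : ℝ) / (n g : ℝ) := hg₀ g hg
  set x := (g : ℝ) / (n g : ℝ) with hxdef
  clear_value x
  have hn2 : (2 : ℝ) ≤ (n g : ℝ) := by exact_mod_cast hn g
  have hnpos : (0 : ℝ) < (n g : ℝ) := by linarith
  have hgR : (26 : ℝ) ≤ (g : ℝ) := by
    have h13 : (13 : ℝ) * (n g : ℝ) ≤ (g : ℝ) := (le_div_iff₀ hnpos).mp (hxdef ▸ hx13)
    nlinarith
  have hg2 : 2 ≤ g := by exact_mod_cast (by linarith : (2 : ℝ) ≤ (g : ℝ))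
  have hx1 : (1 : ℝ) < x := by linarith
  have hlx : 0 < Real.log x := Real.log_pos hx1
  constructor
  · -- lower bound
    refine le_trans ?_ (h2 g (n g) hg2 (le_trans one_le_two (hn g)))
    apply le_min
    · have hxg : x ≤ (g : ℝ) := by
        rw [hxdef]; exact div_le_self (by positivity) (by linarith)
      have hlog : Real.log x ≤ Real.log (g : ℝ) := Real.log_le_log (by linarith) hxg
      have hcU : min U 2 ≤ U := min_le_left _ _
      nlinarith
    · set y := 2 * ((g : ℝ) - 1) / (n g : ℝ) + 1 with hydef
      clear_value y
      have hxy : x ≤ y := by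
        have hyx : y - x = ((g : ℝ) - 2) / (n g : ℝ) + 1 := by
          rw [hydef, hxdef]; field_simp; ring
        have hd : 0 ≤ ((g : ℝ) - 2) / (n g : ℝ) :=
          div_nonneg (by linarith) hnpos.le
        linarith
      have h1y : (1 : ℝ) ≤ y := le_trans hx1.le hxy
      have ha := log_le_arcosh h1y
      have hl : Real.log x ≤ Real.log y := Real.log_le_log (by linarith) hxy
      have hc2 : min U 2 ≤ 2 := min_le_right _ _
      nlinarith
  · -- upper bound
    refine le_trans (h3 g (n g) (hn g)) ?_
    set y := (6 * (g : ℝ) - 6 + 3 * (n g : ℝ)) / (n g : ℝ) with hydef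
    clear_value y
    have hy_eq : y = 6 * x + 3 - 6 / (n g : ℝ) := by
      rw [hydef, hxdef]; field_simp; ring
    have h6n : 6 / (n g : ℝ) ≤ 3 := by rw [div_le_iff₀ hnpos]; linarith
    have h6npos : 0 < 6 / (n g : ℝ) := by positivity
    have h1y : (1 : ℝ) ≤ y := by rw [hy_eq]; nlinarith
    have h2y : 2 * y ≤ x ^ 2 := by rw [hy_eq]; nlinarith
    have ha := arcosh_le_log h1y
    have hl : Real.log (2 * y) ≤ Real.log (x ^ 2) :=
      Real.log_le_log (by positivity) h2y
    rw [Real.log_pow] at hl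
    push_cast at hl
    nlinarith
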